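/- Fix N ≥ 9 and work on ℝ^{N+1} with coordinates (q₀, q₁, …, q_N), with 𝒟f = Σ_{r<N} q_{r+1}∂f/∂q_r. For every λ ∈ ℝ, the function B := λ² − ½q₀λ + ⅛(q₂ + 3q₀²) satisfies ½𝒟³B + 2(λ+q₀)𝒟B + q₁B = (1/16)(q₅ + 10q₀q₃ + 20q₁q₂ + 30q₀²q₁) = (1/16)𝒟(q₄ + 5q₁² + 10q₀q₂ + 10q₀³); in particular the left-hand side does not depend on λ. -/

import Mathlib

/-!
Section 6.5, second nontrivial member of the KdV hierarchy: on `ℝ^{N+1}` with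
coordinates `(q₀, …, q_N)` and the truncated total derivative
`𝒟f = Σ_{r<N} q_{r+1}∂f/∂q_r`, the function
`B = λ² - ½q₀λ + ⅛(q₂ + 3q₀²)` satisfies
`½𝒟³B + 2(λ+q₀)𝒟B + q₁B = (1/16)(q₅ + 10q₀q₃ + 20q₁q₂ + 30q₀²q₁)
  = (1/16)𝒟(q₄ + 5q₁² + 10q₀q₂ + 10q₀³)`.
-/

noncomputable section

open scoped BigOperators

/-- A point of `ℝ^{N+1}`, with coordinates `q₀, …, q_N`. -/
abbrev QPt (N : ℕ) := Fin (N + 1) → ℝ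

/-- The partial derivative `∂f/∂q_i` at a point. -/
def qpd {N : ℕ} (i : Fin (N + 1)) (f : QPt N → ℝ) (p : QPt N) : ℝ :=
  fderiv ℝ f p (Pi.single i 1)

/-- The truncated total derivative `𝒟f = Σ_{r<N} q_{r+1}∂f/∂q_r`. -/
def 𝒟 {N : ℕ} (f : QPt N → ℝ) : QPt N → ℝ := fun p =>
  ∑ r : Fin (N + 1),
    (if h : (r : ℕ) + 1 < N + 1 then p ⟨(r : ℕ) + 1, h⟩ else 0) * qpd r f p

lemma D_eq {N : ℕ} (f : QPt N → ℝ) (p : QPt N) (L : QPt N →L[ℝ] ℝ)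
    (hf : HasFDerivAt f L p) :
    𝒟 f p = ∑ r : Fin (N + 1),
      (if h : (r : ℕ) + 1 < N + 1 then p ⟨(r : ℕ) + 1, h⟩ else 0) * L (Pi.single r 1) := by
  simp only [𝒟, qpd, hf.fderiv]

lemma hasFDerivAt_sq' {E : Type*} [NormedAddCommGroup E] [NormedSpace ℝ E] {f : E → ℝ}
    {f' : E →L[ℝ] ℝ} {x : E} (hf : HasFDerivAt f f' x) :
    HasFDerivAt (fun y => f y ^ 2) ((2 * f x) • f') x := by
  have h := hf.mul hf
  have e : (fun y => f y ^ 2) = fun y => f y * f y := by funext; ring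
  rw [e]
  refine h.congr_fderiv ?_
  ext v
  simp; ring

lemma hasFDerivAt_cube' {E : Type*} [NormedAddCommGroup E] [NormedSpace ℝ E] {f : E → ℝ}
    {f' : E →L[ℝ] ℝ} {x : E} (hf : HasFDerivAt f f' x) :
    HasFDerivAt (fun y => f y ^ 3) ((3 * f x ^ 2) • f') x := by
  have h := hf.mul (hf.mul hf)
  have e : (fun y => f y ^ 3) = fun y => f y * (f y * f y) := by funext; ring
  rw [e]
  refine h.congr_fderiv ?_
  ext v
  simp [smul_smul]; ring

lemma kdv_L1 (N : ℕ) (hN : N ≥ 9) (lam : ℝ) :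
    𝒟 (fun q : QPt N => lam ^ 2 - (1 / 2) * q ⟨0, by omega⟩ * lam
        + (1 / 8) * (q ⟨2, by omega⟩ + 3 * (q ⟨0, by omega⟩) ^ 2))
    = fun q : QPt N => -(1 / 2) * q ⟨1, by omega⟩ * lam
        + (1 / 8) * (q ⟨3, by omega⟩ + 6 * (q ⟨0, by omega⟩ * q ⟨1, by omega⟩)) := by
  funext p
  have h0 := hasFDerivAt_apply (𝕜 := ℝ) (⟨0, by omega⟩ : Fin (N+1)) p
  have h2 := hasFDerivAt_apply (𝕜 := ℝ) (⟨2, by omega⟩ : Fin (N+1)) p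
  have hf := ((hasFDerivAt_const (lam ^ 2) p).sub
      ((h0.const_mul (1/2 : ℝ)).mul_const lam)).add
    ((h2.add ((hasFDerivAt_sq' h0).const_mul (3 : ℝ))).const_mul (1/8 : ℝ))
  erw [D_eq _ _ _ hf]
  simp [Pi.single_apply, mul_add, mul_sub, mul_ite,
    Finset.sum_add_distrib, Finset.sum_sub_distrib, Finset.sum_ite_eq,
    show 0 < N by omega, show 2 < N by omega]
  ring

lemma kdv_L2 (N : ℕ) (hN : N ≥ 9) (lam : ℝ) :
    𝒟 (fun q : QPt N => -(1 / 2) * q ⟨1, by omega⟩ * lam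
        + (1 / 8) * (q ⟨3, by omega⟩ + 6 * (q ⟨0, by omega⟩ * q ⟨1, by omega⟩)))
    = fun q : QPt N => -(1 / 2) * q ⟨2, by omega⟩ * lam
        + (1 / 8) * (q ⟨4, by omega⟩ + 6 * (q ⟨1, by omega⟩) ^ 2
          + 6 * (q ⟨0, by omega⟩ * q ⟨2, by omega⟩)) := by
  funext p
  have h0 := hasFDerivAt_apply (𝕜 := ℝ) (⟨0, by omega⟩ : Fin (N+1)) p
  have h1 := hasFDerivAt_apply (𝕜 := ℝ) (⟨1, by omega⟩ : Fin (N+1)) p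
  have h3 := hasFDerivAt_apply (𝕜 := ℝ) (⟨3, by omega⟩ : Fin (N+1)) p
  have hf := ((h1.const_mul (-(1/2) : ℝ)).mul_const lam).add
    ((h3.add ((h0.mul h1).const_mul (6 : ℝ))).const_mul (1/8 : ℝ))
  erw [D_eq _ _ _ hf]
  simp [Pi.single_apply, mul_add, mul_sub, mul_ite,
    Finset.sum_add_distrib, Finset.sum_sub_distrib, Finset.sum_ite_eq,
    show 0 < N by omega, show 1 < N by omega, show 3 < N by omega]
  ring

lemma kdv_L3 (N : ℕ) (hN : N ≥ 9) (lam : ℝ) (p : QPt N) :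
    𝒟 (fun q : QPt N => -(1 / 2) * q ⟨2, by omega⟩ * lam
        + (1 / 8) * (q ⟨4, by omega⟩ + 6 * (q ⟨1, by omega⟩) ^ 2
          + 6 * (q ⟨0, by omega⟩ * q ⟨2, by omega⟩))) p
    = -(1 / 2) * p ⟨3, by omega⟩ * lam
        + (1 / 8) * (p ⟨5, by omega⟩ + 18 * p ⟨1, by omega⟩ * p ⟨2, by omega⟩
          + 6 * p ⟨0, by omega⟩ * p ⟨3, by omega⟩) := by
  have h0 := hasFDerivAt_apply (𝕜 := ℝ) (⟨0, by omega⟩ : Fin (N+1)) p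
  have h1 := hasFDerivAt_apply (𝕜 := ℝ) (⟨1, by omega⟩ : Fin (N+1)) p
  have h2 := hasFDerivAt_apply (𝕜 := ℝ) (⟨2, by omega⟩ : Fin (N+1)) p
  have h4 := hasFDerivAt_apply (𝕜 := ℝ) (⟨4, by omega⟩ : Fin (N+1)) p
  have hf := ((h2.const_mul (-(1/2) : ℝ)).mul_const lam).add
    (((h4.add ((hasFDerivAt_sq' h1).const_mul (6 : ℝ))).add
        ((h0.mul h2).const_mul (6 : ℝ))).const_mul (1/8 : ℝ))
  erw [D_eq _ _ _ hf]
  simp [Pi.single_apply, mul_add, mul_sub, mul_ite,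
    Finset.sum_add_distrib, Finset.sum_sub_distrib, Finset.sum_ite_eq,
    show 0 < N by omega, show 1 < N by omega, show 2 < N by omega, show 4 < N by omega]
  ring

lemma kdv_L4 (N : ℕ) (hN : N ≥ 9) (p : QPt N) :
    𝒟 (fun q : QPt N => q ⟨4, by omega⟩ + 5 * (q ⟨1, by omega⟩) ^ 2
        + 10 * q ⟨0, by omega⟩ * q ⟨2, by omega⟩ + 10 * (q ⟨0, by omega⟩) ^ 3) p
    = p ⟨5, by omega⟩ + 10 * p ⟨1, by omega⟩ * p ⟨2, by omega⟩
        + (10 * p ⟨1, by omega⟩ * p ⟨2, by omega⟩ + 10 * p ⟨0, by omega⟩ * p ⟨3, by omega⟩)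
        + 30 * (p ⟨0, by omega⟩) ^ 2 * p ⟨1, by omega⟩ := by
  have h0 := hasFDerivAt_apply (𝕜 := ℝ) (⟨0, by omega⟩ : Fin (N+1)) p
  have h1 := hasFDerivAt_apply (𝕜 := ℝ) (⟨1, by omega⟩ : Fin (N+1)) p
  have h2 := hasFDerivAt_apply (𝕜 := ℝ) (⟨2, by omega⟩ : Fin (N+1)) p
  have h4 := hasFDerivAt_apply (𝕜 := ℝ) (⟨4, by omega⟩ : Fin (N+1)) p
  have hf := (((h4.add ((hasFDerivAt_sq' h1).const_mul (5 : ℝ))).add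
      ((h0.const_mul (10 : ℝ)).mul h2)).add
    ((hasFDerivAt_cube' h0).const_mul (10 : ℝ)))
  erw [D_eq _ _ _ hf]
  simp [Pi.single_apply, mul_add, mul_sub, mul_ite,
    Finset.sum_add_distrib, Finset.sum_sub_distrib, Finset.sum_ite_eq,
    show 0 < N by omega, show 1 < N by omega, show 2 < N by omega, show 4 < N by omega]
  ring

/-- The second nontrivial member of the KdV hierarchy: for
`B = λ² - ½q₀λ + ⅛(q₂ + 3q₀²)`,
`½𝒟³B + 2(λ+q₀)𝒟B + q₁B = (1/16)(q₅ + 10q₀q₃ + 20q₁q₂ + 30q₀²q₁)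
  = (1/16)𝒟(q₄ + 5q₁² + 10q₀q₂ + 10q₀³)`;
in particular the left-hand side does not depend on `λ`. -/
theorem kdv_second (N : ℕ) (hN : 9 ≤ N) (lam : ℝ) :
    ∀ p : QPt N,
      (1 / 2) * 𝒟 (𝒟 (𝒟 (fun q => lam ^ 2 - (1 / 2) * q ⟨0, by omega⟩ * lam
            + (1 / 8) * (q ⟨2, by omega⟩ + 3 * (q ⟨0, by omega⟩) ^ 2)))) p
          + 2 * (lam + p ⟨0, by omega⟩)
            * 𝒟 (fun q => lam ^ 2 - (1 / 2) * q ⟨0, by omega⟩ * lam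
                + (1 / 8) * (q ⟨2, by omega⟩ + 3 * (q ⟨0, by omega⟩) ^ 2)) p
          + p ⟨1, by omega⟩ * (lam ^ 2 - (1 / 2) * p ⟨0, by omega⟩ * lam
              + (1 / 8) * (p ⟨2, by omega⟩ + 3 * (p ⟨0, by omega⟩) ^ 2))
        = (1 / 16) * (p ⟨5, by omega⟩ + 10 * p ⟨0, by omega⟩ * p ⟨3, by omega⟩
            + 20 * p ⟨1, by omega⟩ * p ⟨2, by omega⟩
            + 30 * (p ⟨0, by omega⟩) ^ 2 * p ⟨1, by omega⟩)
      ∧ (1 / 16) * (p ⟨5, by omega⟩ + 10 * p ⟨0, by omega⟩ * p ⟨3, by omega⟩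
            + 20 * p ⟨1, by omega⟩ * p ⟨2, by omega⟩
            + 30 * (p ⟨0, by omega⟩) ^ 2 * p ⟨1, by omega⟩)
        = (1 / 16) * 𝒟 (fun q => q ⟨4, by omega⟩ + 5 * (q ⟨1, by omega⟩) ^ 2
            + 10 * q ⟨0, by omega⟩ * q ⟨2, by omega⟩
            + 10 * (q ⟨0, by omega⟩) ^ 3) p := by
  intro p
  constructor
  · rw [kdv_L1 N hN lam, kdv_L2 N hN lam, kdv_L3 N hN lam p]
    beta_reduce
    ring
  · rw [kdv_L4 N hN p]
    ring
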